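/- The minimizer set of the Dirichlet energy with strongly convex differentiable edge potentials minimized at 0 is the linear subspace ker δ_F of C^0(G;F); consequently, for any x ∈ C^0(G;F), the nearest minimizer to x is given by the orthogonal projection of x onto ker δ_F. -/

import Mathlib

open scoped RealInnerProductSpace

noncomputable section

abbrev Stalk (n : ℕ) : Type := EuclideanSpace ℝ (Fin n)

abbrev C0 {V : Type} [Fintype V] (nv : V → ℕ) : Type :=
  PiLp 2 (fun v : V => Stalk (nv v))

abbrev C1 {E : Type} [Fintype E] (ne : E → ℕ) : Type :=
  PiLp 2 (fun e : E => Stalk (ne e))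

/-- The coboundary operator of a cellular sheaf over a graph with edge set `E`,
oriented with endpoint maps `src` and `tgt`, vertex stalks `Stalk (nv v)`,
edge stalks `Stalk (ne e)` and restriction maps `r v e`. -/
def coboundary {V E : Type} [Fintype V] [Fintype E] (nv : V → ℕ) (ne : E → ℕ)
    (src tgt : E → V)
    (r : (v : V) → (e : E) → (Stalk (nv v) →ₗ[ℝ] Stalk (ne e))) :
    C0 nv →ₗ[ℝ] C1 ne :=
  (WithLp.linearEquiv 2 ℝ (∀ e : E, Stalk (ne e))).symm.toLinearMap ∘ₗ
    (LinearMap.pi fun e : E =>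
      r (src e) e ∘ₗ LinearMap.proj (src e) - r (tgt e) e ∘ₗ LinearMap.proj (tgt e)) ∘ₗ
    (WithLp.linearEquiv 2 ℝ (∀ v : V, Stalk (nv v))).toLinearMap

/-- Strict uniqueness of the minimizer at `0` for a strongly convex potential. -/
lemma eq_zero_of_potential_eq {n : ℕ} {m : ℝ} (hm : 0 < m) {U : Stalk n → ℝ}
    (hsc : StrongConvexOn Set.univ m U) (hmin0 : ∀ y, U 0 ≤ U y)
    {y : Stalk n} (h : U y = U 0) : y = 0 := by
  by_contra hne
  have hs := hsc.strictConvexOn hm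
  have := hs.2 (Set.mem_univ 0) (Set.mem_univ y) (Ne.symm hne)
    (by norm_num : (0:ℝ) < 1/2) (by norm_num : (0:ℝ) < 1/2) (by norm_num)
  rw [smul_zero, zero_add, h] at this
  norm_num at this
  have h2 : U ((1/2 : ℝ) • y) < U 0 := by linarith
  exact absurd (hmin0 _) (not_le.mpr h2)

/-- With differentiable strongly convex edge potentials minimized at `0`, the minimizer
set of the Dirichlet energy is the linear subspace `ker δ`; consequently the nearest
minimizer to any `x` is the orthogonal projection of `x` onto `ker δ`. -/
theorem minimizer_set_eq_ker_and_nearest_is_projection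
    {V E : Type} [Fintype V] [Fintype E] (nv : V → ℕ) (ne : E → ℕ)
    (src tgt : E → V)
    (r : (v : V) → (e : E) → (Stalk (nv v) →ₗ[ℝ] Stalk (ne e)))
    (Ue : (e : E) → Stalk (ne e) → ℝ) (me : E → ℝ)
    (hme : ∀ e, 0 < me e)
    (hdiff : ∀ e, Differentiable ℝ (Ue e))
    (hsc : ∀ e, StrongConvexOn Set.univ (me e) (Ue e))
    (hmin0 : ∀ e (y : Stalk (ne e)), Ue e 0 ≤ Ue e y) :
    {x : C0 nv |
        IsMinOn (fun z : C0 nv => ∑ e : E, Ue e (coboundary nv ne src tgt r z e))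
          Set.univ x}
      = (LinearMap.ker (coboundary nv ne src tgt r) : Set (C0 nv)) ∧
    ∀ x : C0 nv, ∀ y ∈ LinearMap.ker (coboundary nv ne src tgt r),
      ‖x - (Submodule.orthogonalProjectionOnto (LinearMap.ker (coboundary nv ne src tgt r)) x : C0 nv)‖
        ≤ ‖x - y‖ := by
  set δ := coboundary nv ne src tgt r with hδ
  constructor
  · ext x
    simp only [Set.mem_setOf_eq, SetLike.mem_coe, LinearMap.mem_ker]
    constructor
    · intro hx
      have h0 : (∑ e : E, Ue e (δ x e)) ≤ ∑ e : E, Ue e (δ (0 : C0 nv) e) :=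
        isMinOn_iff.mp hx 0 (Set.mem_univ _)
      have hδ0 : δ (0 : C0 nv) = 0 := map_zero δ
      rw [hδ0] at h0
      have hle : ∀ e ∈ Finset.univ, Ue e ((0 : C1 ne) e) ≤ Ue e (δ x e) := by
        intro e _
        have : (0 : C1 ne) e = 0 := rfl
        rw [this]
        exact hmin0 e _
      have hsum : (∑ e : E, Ue e ((0 : C1 ne) e)) = ∑ e : E, Ue e (δ x e) :=
        le_antisymm (Finset.sum_le_sum hle) h0
      have heq := (Finset.sum_eq_sum_iff_of_le hle).mp hsum
      apply WithLp.ofLp_injective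
      funext e
      have he : Ue e (δ x e) = Ue e 0 := by
        have := heq e (Finset.mem_univ e)
        simpa using this.symm
      exact eq_zero_of_potential_eq (hme e) (hsc e) (hmin0 e) he
    · intro hx
      refine isMinOn_iff.mpr fun z _ => ?_
      have hx' : ∀ e, δ x e = 0 := fun e => congrFun (congrArg WithLp.ofLp hx) e
      calc (∑ e : E, Ue e (δ x e)) = ∑ e : E, Ue e 0 := by
            refine Finset.sum_congr rfl fun e _ => by rw [hx' e]
        _ ≤ ∑ e : E, Ue e (δ z e) := Finset.sum_le_sum fun e _ => hmin0 e _
  · intro x y hy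
    rw [← Submodule.starProjection_apply, Submodule.starProjection_minimal]
    exact ciInf_le ⟨0, fun v ⟨w, hw⟩ => hw ▸ norm_nonneg _⟩ (⟨y, hy⟩ : LinearMap.ker δ)
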